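/- Let H be a finite simple graph and v a non-isolated vertex of H. Then Tr(H,v) is well-covered if and only if H is well-covered. -/

import Mathlib

open scoped Classical

/-- A finset of vertices is independent if no two of its members are adjacent. -/
def IsIndep {W : Type*} (G : SimpleGraph W) (s : Finset W) : Prop :=
  ∀ x ∈ s, ∀ y ∈ s, ¬ G.Adj x y

/-- A maximal independent set: independent and not properly contained in another
independent set. -/
def IsMaxIndep {W : Type*} (G : SimpleGraph W) (s : Finset W) : Prop :=
  IsIndep G s ∧ ∀ t : Finset W, IsIndep G t → s ⊆ t → t = s

/-- The independence number `α(G)`: the maximum size of an independent set. -/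
noncomputable def indepNum {W : Type*} (G : SimpleGraph W) [Fintype W] : ℕ :=
  sSup {n | ∃ s : Finset W, IsIndep G s ∧ s.card = n}

/-- Trung's construction `Tr(H, v)`: three new vertices `a = Sum.inr 0`, `b = Sum.inr 1`,
`c = Sum.inr 2` are added to `H`; `c` is joined to `b` and to every neighbor of `v`,
`b` is joined to `a`, and `a` is joined to `v`. -/
def Tr {V : Type*} (H : SimpleGraph V) (v : V) : SimpleGraph (V ⊕ Fin 3) :=
  SimpleGraph.fromRel (fun x y =>
    match x, y with
    | Sum.inl x, Sum.inl y => H.Adj x y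
    | Sum.inl x, Sum.inr i => (i = 0 ∧ x = v) ∨ (i = 2 ∧ H.Adj x v)
    | Sum.inr i, Sum.inr j => (i = 0 ∧ j = 1) ∨ (i = 1 ∧ j = 2)
    | _, _ => False)

/-- The set of vertices remaining after deleting the closed neighborhood `N[F]`
of a set `F` of vertices. -/
def offNbhd {V : Type*} (G : SimpleGraph V) (F : Set V) : Set V :=
  {w | w ∉ F ∧ ∀ u ∈ F, ¬ G.Adj u w}

/-- `G_F`: the induced subgraph of `G` on `V(G) \ N[F]`. -/
def delNbhd {V : Type*} (G : SimpleGraph V) (F : Set V) : SimpleGraph (offNbhd G F) :=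
  G.induce (offNbhd G F)

/-- `H_v = H \ N[v]`. -/
def delVert {V : Type*} (H : SimpleGraph V) (v : V) : SimpleGraph (offNbhd H {v}) :=
  delNbhd H {v}

/-- The independence polynomial `I(G, x) = Σ_i a_i x^i` of a finite graph,
as a polynomial over `ℚ`. -/
noncomputable def indepPoly {W : Type*} (G : SimpleGraph W) [Fintype W] : Polynomial ℚ :=
  ∑ s ∈ Finset.univ.filter (fun s : Finset W => IsIndep G s),
    (Polynomial.X : Polynomial ℚ) ^ s.card

/-- `a_i(G)`: the number of independent sets of size `i`, indexed by `ℤ`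
(so that it is `0` for `i < 0`). -/
noncomputable def numIndep {W : Type*} (G : SimpleGraph W) [Fintype W] (i : ℤ) : ℕ :=
  (Finset.univ.filter (fun s : Finset W => IsIndep G s ∧ (s.card : ℤ) = i)).card

/-- A finite graph is well-covered if every maximal independent set has size `α(G)`. -/
def WellCovered {W : Type*} (G : SimpleGraph W) [Fintype W] : Prop :=
  ∀ s : Finset W, IsMaxIndep G s → s.card = indepNum G

/-- A finite graph is a `W₂` graph if it has at least two vertices and every pair of
disjoint independent sets is contained in a pair of disjoint maximum independent sets. -/
def IsW2 {W : Type*} (G : SimpleGraph W) [Fintype W] : Prop :=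
  2 ≤ Fintype.card W ∧
    ∀ A B : Finset W, IsIndep G A → IsIndep G B → Disjoint A B →
      ∃ A' B' : Finset W, IsIndep G A' ∧ IsIndep G B' ∧ Disjoint A' B' ∧
        A ⊆ A' ∧ B ⊆ B' ∧ A'.card = indepNum G ∧ B'.card = indepNum G

namespace TrAux

/-! ### Generic lemmas -/

lemma indep_insert {W : Type*} [DecidableEq W] {G : SimpleGraph W} {s : Finset W} {z : W}
    (hs : IsIndep G s) (h : ∀ y ∈ s, ¬ G.Adj z y) : IsIndep G (insert z s) := by
  intro x hx y hy hadj
  rcases Finset.mem_insert.1 hx with hx' | hx'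
  · rcases Finset.mem_insert.1 hy with hy' | hy'
    · rw [hx', hy'] at hadj; exact G.loopless.irrefl _ hadj
    · exact h y hy' (hx' ▸ hadj)
  · rcases Finset.mem_insert.1 hy with hy' | hy'
    · exact h x hx' (G.adj_symm (hy' ▸ hadj))
    · exact hs x hx' y hy' hadj

lemma maxIndep_adj {W : Type*} {G : SimpleGraph W} {s : Finset W} (hs : IsMaxIndep G s)
    {z : W} (hz : z ∉ s) : ∃ y ∈ s, G.Adj z y := by
  classical
  by_contra hcon
  push_neg at hcon
  have h := hs.2 (insert z s) (indep_insert hs.1 hcon) (Finset.subset_insert _ _)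
  exact hz (h ▸ Finset.mem_insert_self z s)

lemma exists_maxIndep_superset {W : Type*} [Fintype W] (G : SimpleGraph W) {s : Finset W}
    (hs : IsIndep G s) : ∃ t, IsMaxIndep G t ∧ s ⊆ t := by
  classical
  set F : Finset (Finset W) := Finset.univ.filter (fun t => IsIndep G t ∧ s ⊆ t) with hF
  have hmem : ∀ t, t ∈ F ↔ IsIndep G t ∧ s ⊆ t := by
    intro t; simp [hF]
  have hne : F.Nonempty := ⟨s, (hmem s).2 ⟨hs, Finset.Subset.refl s⟩⟩
  obtain ⟨t, htF, hmax⟩ := F.exists_max_image Finset.card hne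
  obtain ⟨ht, hst⟩ := (hmem t).1 htF
  refine ⟨t, ⟨ht, fun t' ht' hsub => ?_⟩, hst⟩
  have ht'F : t' ∈ F := (hmem t').2 ⟨ht', hst.trans hsub⟩
  exact (Finset.eq_of_subset_of_card_le hsub (hmax t' ht'F)).symm

lemma card_le_indepNum {W : Type*} [Fintype W] {G : SimpleGraph W} {s : Finset W}
    (hs : IsIndep G s) : s.card ≤ indepNum G := by
  apply le_csSup
  · exact ⟨Fintype.card W, by rintro n ⟨t, -, rfl⟩; exact t.card_le_univ.trans_eq Finset.card_univ⟩
  · exact ⟨s, hs, rfl⟩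

lemma indepNum_attained {W : Type*} [Fintype W] (G : SimpleGraph W) :
    ∃ s : Finset W, IsIndep G s ∧ s.card = indepNum G := by
  have h : indepNum G ∈ {n | ∃ s : Finset W, IsIndep G s ∧ s.card = n} := by
    apply Nat.sSup_mem
    · exact ⟨0, ∅, by intro x hx; simp at hx, rfl⟩
    · exact ⟨Fintype.card W, by rintro n ⟨t, -, rfl⟩; exact t.card_le_univ.trans_eq Finset.card_univ⟩
  exact h

lemma wellCovered_iff_cards {W : Type*} [Fintype W] (G : SimpleGraph W) :
    WellCovered G ↔ ∀ s t, IsMaxIndep G s → IsMaxIndep G t → s.card = t.card := by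
  constructor
  · intro h s t hs ht; rw [h s hs, h t ht]
  · intro h s hs
    obtain ⟨m, hm, hmc⟩ := indepNum_attained G
    obtain ⟨m', hm', hsub⟩ := exists_maxIndep_superset G hm
    have h1 : m'.card = indepNum G :=
      le_antisymm (card_le_indepNum hm'.1) (hmc ▸ Finset.card_le_card hsub)
    rw [← h1]; exact h s m' hs hm'

/-! ### Adjacency in Tr -/

variable {V : Type*} {H : SimpleGraph V} {v : V}

lemma tr_adj_ll {x y : V} : (Tr H v).Adj (Sum.inl x) (Sum.inl y) ↔ H.Adj x y := by
  simp only [Tr, SimpleGraph.fromRel_adj]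
  constructor
  · rintro ⟨-, h | h⟩
    · exact h
    · exact h.symm
  · intro h; exact ⟨by simpa using h.ne, Or.inl h⟩
lemma tr_adj_l0 {x : V} : (Tr H v).Adj (Sum.inl x) (Sum.inr 0) ↔ x = v := by
  simp [Tr, SimpleGraph.fromRel_adj]
lemma tr_adj_l1 {x : V} : ¬ (Tr H v).Adj (Sum.inl x) (Sum.inr 1) := by
  simp [Tr, SimpleGraph.fromRel_adj]
lemma tr_adj_l2 {x : V} : (Tr H v).Adj (Sum.inl x) (Sum.inr 2) ↔ H.Adj x v := by
  simp [Tr, SimpleGraph.fromRel_adj]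
lemma tr_adj_01 : (Tr H v).Adj (Sum.inr 0 : V ⊕ Fin 3) (Sum.inr 1) := by
  simp [Tr, SimpleGraph.fromRel_adj]
lemma tr_adj_12 : (Tr H v).Adj (Sum.inr 1 : V ⊕ Fin 3) (Sum.inr 2) := by
  simp [Tr, SimpleGraph.fromRel_adj]
lemma tr_adj_02 : ¬ (Tr H v).Adj (Sum.inr 0 : V ⊕ Fin 3) (Sum.inr 2) := by
  simp [Tr, SimpleGraph.fromRel_adj]

/-! ### Lemma B: lifting maximal independent sets of H to Tr H v -/

lemma liftB (T : Finset V) (hT : IsMaxIndep H T) :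
    IsMaxIndep (Tr H v) (insert (Sum.inr 1) (T.image (Sum.inl : V → V ⊕ Fin 3))) ∧
      (insert (Sum.inr 1) (T.image (Sum.inl : V → V ⊕ Fin 3))).card = T.card + 1 := by
  have hb1 : (Sum.inr 1 : V ⊕ Fin 3) ∉ T.image (Sum.inl : V → V ⊕ Fin 3) := by simp
  constructor
  · constructor
    · -- independent
      intro x hx y hy
      rcases Finset.mem_insert.1 hx with hx' | hx'
      · rcases Finset.mem_insert.1 hy with hy' | hy'
        · rw [hx', hy']; exact fun h => (Tr H v).loopless.irrefl _ h
        · obtain ⟨w, hw, hw'⟩ := Finset.mem_image.1 hy'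
          rw [hx', ← hw']
          exact fun h => tr_adj_l1 h.symm
      · obtain ⟨w, hw, hw'⟩ := Finset.mem_image.1 hx'
        rcases Finset.mem_insert.1 hy with hy' | hy'
        · rw [hy', ← hw']; exact tr_adj_l1
        · obtain ⟨u, hu, hu'⟩ := Finset.mem_image.1 hy'
          rw [← hw', ← hu']
          exact fun h => hT.1 w hw u hu (tr_adj_ll.1 h)
    · -- maximal
      intro t ht hsub
      apply Finset.Subset.antisymm _ hsub
      intro z hz
      have hbt : (Sum.inr 1 : V ⊕ Fin 3) ∈ t := hsub (Finset.mem_insert_self _ _)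
      rcases z with w | i
      · have hwT : w ∈ T := by
          have hTt : ∀ u ∈ T, (Sum.inl u : V ⊕ Fin 3) ∈ t := fun u hu =>
            hsub (Finset.mem_insert_of_mem (Finset.mem_image_of_mem _ hu))
          have hins : IsIndep H (insert w T) := by
            apply indep_insert hT.1
            intro u hu hadj
            exact ht _ hz _ (hTt u hu) (tr_adj_ll.2 hadj)
          have := hT.2 (insert w T) hins (Finset.subset_insert _ _)
          exact this ▸ Finset.mem_insert_self w T
        exact Finset.mem_insert_of_mem (Finset.mem_image_of_mem _ hwT)
      · fin_cases i
        · exact absurd tr_adj_01 (ht _ hz _ hbt)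
        · exact Finset.mem_insert_self _ _
        · exact absurd tr_adj_12 (ht _ hbt _ hz)
  · rw [Finset.card_insert_of_notMem hb1, Finset.card_image_of_injective _ Sum.inl_injective]

/-! ### Lemma A: projecting maximal independent sets of Tr H v to H -/

lemma projA (S : Finset (V ⊕ Fin 3)) (hS : IsMaxIndep (Tr H v) S) :
    ∃ T : Finset V, IsMaxIndep H T ∧ T.card + 1 = S.card := by
  classical
  set T : Finset V := S.preimage Sum.inl (fun x _ y _ h => Sum.inl.inj h) with hTdef
  have hmemT : ∀ w, w ∈ T ↔ (Sum.inl w : V ⊕ Fin 3) ∈ S := fun w => Finset.mem_preimage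
  have hTindep : IsIndep H T := fun x hx y hy hadj =>
    hS.1 _ ((hmemT x).1 hx) _ ((hmemT y).1 hy) (tr_adj_ll.2 hadj)
  -- shared maximality engine
  have maxkey : ∀ T' : Finset V, IsIndep H T' → T ⊆ T' →
      (∀ (t : Finset V), IsIndep H t → T' ⊆ t → ∀ w ∈ t, w ∉ T' →
        ∀ i : Fin 3, Sum.inr i ∈ S → ¬ (Tr H v).Adj (Sum.inl w) (Sum.inr i)) →
      IsMaxIndep H T' := by
    intro T' hT'ind hTT' hkey
    refine ⟨hT'ind, fun t ht hsub => ?_⟩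
    apply Finset.Subset.antisymm _ hsub
    intro w hw
    by_contra hwT'
    have hwS : (Sum.inl w : V ⊕ Fin 3) ∉ S := fun h => hwT' (hTT' ((hmemT w).2 h))
    have hind : IsIndep (Tr H v) (insert (Sum.inl w) S) := by
      apply indep_insert hS.1
      intro y hy
      rcases y with u | i
      · intro hadj
        exact ht _ hw _ (hsub (hTT' ((hmemT u).2 hy))) (tr_adj_ll.1 hadj)
      · exact hkey t ht hsub w hw hwT' i hy
    have := hS.2 _ hind (Finset.subset_insert _ _)
    exact hwS (this ▸ Finset.mem_insert_self _ _)
  -- shared cardinality engine, for the case where exactly one inr is in S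
  have cardkey : ∀ i : Fin 3, Sum.inr i ∈ S → (∀ j : Fin 3, Sum.inr j ∈ S → j = i) →
      S.card = T.card + 1 := by
    intro i hi huniq
    have hSeq : S = insert (Sum.inr i) (T.image (Sum.inl : V → V ⊕ Fin 3)) := by
      ext z
      constructor
      · intro hz
        rcases z with w | j
        · exact Finset.mem_insert_of_mem (Finset.mem_image_of_mem _ ((hmemT w).2 hz))
        · rw [huniq j hz]; exact Finset.mem_insert_self _ _
      · intro hz
        rcases Finset.mem_insert.1 hz with hz' | hz'
        · exact hz' ▸ hi
        · obtain ⟨w, hw, hw'⟩ := Finset.mem_image.1 hz'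
          exact hw' ▸ (hmemT w).1 hw
    rw [hSeq, Finset.card_insert_of_notMem (by simp),
      Finset.card_image_of_injective _ Sum.inl_injective]
  by_cases ha : (Sum.inr 0 : V ⊕ Fin 3) ∈ S
  · have hb : (Sum.inr 1 : V ⊕ Fin 3) ∉ S := fun hb => hS.1 _ ha _ hb tr_adj_01
    have hvT : v ∉ T := fun hvT => hS.1 _ ((hmemT v).1 hvT) _ ha (tr_adj_l0.2 rfl)
    by_cases hc : (Sum.inr 2 : V ⊕ Fin 3) ∈ S
    · -- case {a, c}: T' = insert v T
      have hNv : ∀ u ∈ T, ¬ H.Adj u v := fun u hu hadj =>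
        hS.1 _ ((hmemT u).1 hu) _ hc (tr_adj_l2.2 hadj)
      have hT'indep : IsIndep H (insert v T) :=
        indep_insert hTindep (fun u hu hadj => hNv u hu hadj.symm)
      refine ⟨insert v T, maxkey _ hT'indep (Finset.subset_insert _ _) ?_, ?_⟩
      · intro t ht hsub w hw hwT' i hiS
        fin_cases i
        · intro hadj
          have hwv : w = v := tr_adj_l0.1 hadj
          exact hwT' (by rw [hwv]; exact Finset.mem_insert_self v T)
        · exact tr_adj_l1
        · intro hadj
          exact ht _ hw _ (hsub (Finset.mem_insert_self v T)) (tr_adj_l2.1 hadj)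
      · -- cards: S = insert a (insert c (T.image inl))
        have hSeq : S = insert (Sum.inr 0)
            (insert (Sum.inr 2) (T.image (Sum.inl : V → V ⊕ Fin 3))) := by
          ext z
          constructor
          · intro hz
            rcases z with w | i
            · exact Finset.mem_insert_of_mem (Finset.mem_insert_of_mem
                (Finset.mem_image_of_mem _ ((hmemT w).2 hz)))
            · fin_cases i
              · exact Finset.mem_insert_self _ _
              · exact absurd hz hb
              · exact Finset.mem_insert_of_mem (Finset.mem_insert_self _ _)
          · intro hz
            rcases Finset.mem_insert.1 hz with hz' | hz'
            · exact hz' ▸ ha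
            rcases Finset.mem_insert.1 hz' with hz'' | hz''
            · exact hz'' ▸ hc
            obtain ⟨w, hw, hw'⟩ := Finset.mem_image.1 hz''
            exact hw' ▸ (hmemT w).1 hw
        have himg : (Sum.inr 2 : V ⊕ Fin 3) ∉ T.image (Sum.inl : V → V ⊕ Fin 3) := by simp
        have h02 : (Sum.inr 0 : V ⊕ Fin 3) ∉
            insert (Sum.inr 2) (T.image (Sum.inl : V → V ⊕ Fin 3)) := by simp
        rw [Finset.card_insert_of_notMem hvT, hSeq, Finset.card_insert_of_notMem h02,
          Finset.card_insert_of_notMem himg, Finset.card_image_of_injective _ Sum.inl_injective]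
    · -- case {a} alone
      obtain ⟨y, hy, hyc⟩ := maxIndep_adj hS hc
      obtain ⟨x, hxT, hxv⟩ : ∃ x ∈ T, H.Adj x v := by
        rcases y with u | i
        · exact ⟨u, (hmemT u).2 hy, tr_adj_l2.1 hyc.symm⟩
        · fin_cases i
          · exact (tr_adj_02 hyc.symm).elim
          · exact absurd hy hb
          · exact absurd hyc ((Tr H v).loopless.irrefl _)
      refine ⟨T, maxkey T hTindep (Finset.Subset.refl T) ?_, (cardkey 0 ha ?_).symm⟩
      · intro t ht hsub w hw hwT i hiS
        fin_cases i
        · intro hadj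
          have hwv : w = v := tr_adj_l0.1 hadj
          exact ht _ (hsub hxT) _ hw (hwv ▸ hxv)
        · exact tr_adj_l1
        · exact absurd hiS hc
      · intro j hj
        fin_cases j
        · rfl
        · exact absurd hj hb
        · exact absurd hj hc
  · by_cases hc : (Sum.inr 2 : V ⊕ Fin 3) ∈ S
    · -- case {c} (possibly with v ∈ T)
      have hb : (Sum.inr 1 : V ⊕ Fin 3) ∉ S := fun hb => hS.1 _ hb _ hc tr_adj_12
      have hvT : v ∈ T := by
        obtain ⟨y, hy, hya⟩ := maxIndep_adj hS ha
        rcases y with u | i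
        · have : u = v := tr_adj_l0.1 hya.symm
          exact this ▸ (hmemT u).2 hy
        · fin_cases i
          · exact absurd hya ((Tr H v).loopless.irrefl _)
          · exact absurd hy hb
          · exact (tr_adj_02 hya).elim
      refine ⟨T, maxkey T hTindep (Finset.Subset.refl T) ?_, (cardkey 2 hc ?_).symm⟩
      · intro t ht hsub w hw hwT i hiS
        fin_cases i
        · exact absurd hiS ha
        · exact absurd hiS hb
        · intro hadj
          exact ht _ hw _ (hsub hvT) (tr_adj_l2.1 hadj)
      · intro j hj
        fin_cases j
        · exact absurd hj ha
        · exact absurd hj hb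
        · rfl
    · -- case {b}
      have hb : (Sum.inr 1 : V ⊕ Fin 3) ∈ S := by
        by_contra hb
        obtain ⟨y, hy, hyb⟩ := maxIndep_adj hS hb
        rcases y with u | i
        · exact tr_adj_l1 hyb.symm
        · fin_cases i
          · exact ha hy
          · exact absurd hyb ((Tr H v).loopless.irrefl _)
          · exact hc hy
      refine ⟨T, maxkey T hTindep (Finset.Subset.refl T) ?_, (cardkey 1 hb ?_).symm⟩
      · intro t ht hsub w hw hwT i hiS
        fin_cases i
        · exact absurd hiS ha
        · exact tr_adj_l1
        · exact absurd hiS hc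
      · intro j hj
        fin_cases j
        · exact absurd hj ha
        · rfl
        · exact absurd hj hc

end TrAux

theorem wellCovered_Tr_iff {V : Type*} [Fintype V] (H : SimpleGraph V) (v : V)
    (hv : ∃ u, H.Adj v u) :
    WellCovered (Tr H v) ↔ WellCovered H := by
  rw [TrAux.wellCovered_iff_cards, TrAux.wellCovered_iff_cards]
  constructor
  · intro h T T' hT hT'
    obtain ⟨hS, hcS⟩ := TrAux.liftB T hT
    obtain ⟨hS', hcS'⟩ := TrAux.liftB T' hT'
    have := h _ _ hS hS'
    omega
  · intro h S S' hS hS'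
    obtain ⟨T, hT, hc⟩ := TrAux.projA S hS
    obtain ⟨T', hT', hc'⟩ := TrAux.projA S' hS'
    have := h T T' hT hT'
    omega
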